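/- Discrete convex-convex convolution algorithm correctness: let f : {0,...,n} → ℝ and g : {0,...,m} → ℝ be convex sequences (i.e., their increments r_i = f(i+1)-f(i) and ρ_j = g(j+1)-g(j) are nondecreasing). Then the sequence h : {0,...,n+m} → ℝ defined by h(0) = f(0) + g(0) and whose successive increments are the multiset {r_0,...,r_{n-1}, ρ_0,...,ρ_{m-1}} sorted in nondecreasing order satisfies h(k) = min_{i+j=k, 0≤i≤n, 0≤j≤m} (f(i) + g(j)) for all k. -/

import Mathlib

private lemma dcc_mono (N : ℕ) (u : ℕ → ℝ) (hu : ∀ i, i + 1 < N → u i ≤ u (i + 1)) :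
    ∀ a b, a ≤ b → b < N → u a ≤ u b := by
  intro a b hab
  induction hab with
  | refl => intro _; exact le_refl _
  | @step b hb ih =>
    intro hbN
    exact le_trans (ih (by omega)) (hu b hbN)

private lemma dcc_Ico_cons {a b : ℕ} (hab : a < b) :
    (Finset.Ico a b).val = a ::ₘ (Finset.Ico (a + 1) b).val := by
  rw [← Finset.insert_Ico_add_one_left_eq_Ico hab, Finset.insert_val_of_notMem (by simp)]

private lemma dcc_step (n m : ℕ) (f g h : ℕ → ℝ) (k i j : ℕ)
    (monof : ∀ a b, a ≤ b → b < n → f (a + 1) - f a ≤ f (b + 1) - f b)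
    (monog : ∀ a b, a ≤ b → b < m → g (a + 1) - g a ≤ g (b + 1) - g b)
    (monoh : ∀ a b, a ≤ b → b < n + m → h (a + 1) - h a ≤ h (b + 1) - h b)
    (hk : k < n + m) (hij : i + j = k) (hi : i ≤ n) (hj : j ≤ m)
    (hval : h k = f i + g j)
    (hmul : (Finset.Ico k (n + m)).val.map (fun t => h (t + 1) - h t) =
        (Finset.Ico i n).val.map (fun t => f (t + 1) - f t) +
          (Finset.Ico j m).val.map (fun t => g (t + 1) - g t))
    (hlow : ∀ i' j', i' + j' = k → i' ≤ n → j' ≤ m → h k ≤ f i' + g j')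
    (hin : i < n)
    (hcase : j = m ∨ (j < m ∧ f (i + 1) - f i ≤ g (j + 1) - g j)) :
    h (k + 1) = f (i + 1) + g j ∧
      ((Finset.Ico (k + 1) (n + m)).val.map (fun t => h (t + 1) - h t) =
        (Finset.Ico (i + 1) n).val.map (fun t => f (t + 1) - f t) +
          (Finset.Ico j m).val.map (fun t => g (t + 1) - g t)) ∧
      (∀ i' j', i' + j' = k + 1 → i' ≤ n → j' ≤ m → h (k + 1) ≤ f i' + g j') := by
  have hIco : (Finset.Ico k (n + m)).val = k ::ₘ (Finset.Ico (k + 1) (n + m)).val :=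
    dcc_Ico_cons hk
  have hIcoi : (Finset.Ico i n).val = i ::ₘ (Finset.Ico (i + 1) n).val := dcc_Ico_cons hin
  have hminH : ∀ x ∈ (Finset.Ico k (n + m)).val.map (fun t => h (t + 1) - h t),
      h (k + 1) - h k ≤ x := by
    intro x hx
    obtain ⟨t, ht, rfl⟩ := Multiset.mem_map.mp hx
    rw [Finset.mem_val, Finset.mem_Ico] at ht
    exact monoh k t ht.1 ht.2
  have hminr : ∀ x ∈ (Finset.Ico i n).val.map (fun t => f (t + 1) - f t) +
      (Finset.Ico j m).val.map (fun t => g (t + 1) - g t), f (i + 1) - f i ≤ x := by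
    intro x hx
    rcases Multiset.mem_add.mp hx with hx | hx
    · obtain ⟨t, ht, rfl⟩ := Multiset.mem_map.mp hx
      rw [Finset.mem_val, Finset.mem_Ico] at ht
      exact monof i t ht.1 ht.2
    · obtain ⟨t, ht, rfl⟩ := Multiset.mem_map.mp hx
      rw [Finset.mem_val, Finset.mem_Ico] at ht
      rcases hcase with hjm | ⟨hjm, hrρ⟩
      · omega
      · exact le_trans hrρ (monog j t ht.1 ht.2)
  have hmemσ : h (k + 1) - h k ∈ (Finset.Ico k (n + m)).val.map (fun t => h (t + 1) - h t) :=
    Multiset.mem_map_of_mem _ (by rw [Finset.mem_val, Finset.mem_Ico]; omega)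
  have hmemr : f (i + 1) - f i ∈ (Finset.Ico i n).val.map (fun t => f (t + 1) - f t) +
      (Finset.Ico j m).val.map (fun t => g (t + 1) - g t) :=
    Multiset.mem_add.mpr (Or.inl (Multiset.mem_map_of_mem _
      (by rw [Finset.mem_val, Finset.mem_Ico]; omega)))
  have h1 : h (k + 1) - h k ≤ f (i + 1) - f i := by
    rw [← hmul] at hmemr; exact hminH _ hmemr
  have h2 : f (i + 1) - f i ≤ h (k + 1) - h k := by
    rw [hmul] at hmemσ; exact hminr _ hmemσ
  have hσk : h (k + 1) - h k = f (i + 1) - f i := le_antisymm h1 h2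
  refine ⟨?_, ?_, ?_⟩
  · linarith [hσk, hval]
  · have hcons : (k ::ₘ (Finset.Ico (k + 1) (n + m)).val).map (fun t => h (t + 1) - h t) =
        (i ::ₘ (Finset.Ico (i + 1) n).val).map (fun t => f (t + 1) - f t) +
          (Finset.Ico j m).val.map (fun t => g (t + 1) - g t) := by
      rw [← hIco, ← hIcoi]; exact hmul
    simp only [Multiset.map_cons, Multiset.cons_add] at hcons
    rw [hσk] at hcons
    exact (Multiset.cons_inj_right _).mp hcons
  · intro i' j' hij' hi' hj'
    have hk1 : h (k + 1) = h k + (h (k + 1) - h k) := by ring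
    rcases (by omega : i < i' ∨ j < j') with hlt | hlt
    · obtain ⟨t, rfl⟩ : ∃ t, i' = t + 1 := ⟨i' - 1, by omega⟩
      have h5 : h k ≤ f t + g j' := hlow t j' (by omega) (by omega) hj'
      have h6 : h (k + 1) - h k ≤ f (t + 1) - f t := by
        rw [hσk]; exact monof i t (by omega) (by omega)
      rw [hk1]; linarith
    · obtain ⟨t, rfl⟩ : ∃ t, j' = t + 1 := ⟨j' - 1, by omega⟩
      have hrρ : f (i + 1) - f i ≤ g (j + 1) - g j := by
        rcases hcase with h' | h'
        · omega
        · exact h'.2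
      have h5 : h k ≤ f i' + g t := hlow i' t (by omega) hi' (by omega)
      have h6 : h (k + 1) - h k ≤ g (t + 1) - g t := by
        rw [hσk]; exact le_trans hrρ (monog j t (by omega) (by omega))
      rw [hk1]; linarith

/-- Correctness of the discrete convex-convex (min,plus)-convolution algorithm:
if `f : {0,…,n} → ℝ` and `g : {0,…,m} → ℝ` are convex sequences and `h` is the
sequence with `h 0 = f 0 + g 0`, nondecreasing increments, whose multiset of
increments is the merge of those of `f` and `g` (i.e. sorted in nondecreasing
order), then `h k = min_{i+j=k} (f i + g j)`. -/
theorem discrete_convex_convolution (n m : ℕ) (f g h : ℕ → ℝ)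
    (hf : ∀ i, i + 1 < n → f (i + 1) - f i ≤ f (i + 2) - f (i + 1))
    (hg : ∀ j, j + 1 < m → g (j + 1) - g j ≤ g (j + 2) - g (j + 1))
    (h0 : h 0 = f 0 + g 0)
    (hsorted : ∀ k, k + 1 < n + m → h (k + 1) - h k ≤ h (k + 2) - h (k + 1))
    (hmerge : (Multiset.range (n + m)).map (fun k => h (k + 1) - h k) =
        (Multiset.range n).map (fun i => f (i + 1) - f i) +
          (Multiset.range m).map (fun j => g (j + 1) - g j)) :
    ∀ k ≤ n + m,
      h k = sInf {z | ∃ i j : ℕ, i + j = k ∧ i ≤ n ∧ j ≤ m ∧ z = f i + g j} := by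
  have monof : ∀ a b, a ≤ b → b < n → f (a + 1) - f a ≤ f (b + 1) - f b := by
    have := dcc_mono n (fun t => f (t + 1) - f t) (by intro i hi; simpa using hf i hi)
    intro a b hab hb; simpa using this a b hab hb
  have monog : ∀ a b, a ≤ b → b < m → g (a + 1) - g a ≤ g (b + 1) - g b := by
    have := dcc_mono m (fun t => g (t + 1) - g t) (by intro i hi; simpa using hg i hi)
    intro a b hab hb; simpa using this a b hab hb
  have monoh : ∀ a b, a ≤ b → b < n + m → h (a + 1) - h a ≤ h (b + 1) - h b := by
    have := dcc_mono (n + m) (fun t => h (t + 1) - h t) (by intro i hi; simpa using hsorted i hi)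
    intro a b hab hb; simpa using this a b hab hb
  have key : ∀ k, k ≤ n + m →
      (∃ i j, i + j = k ∧ i ≤ n ∧ j ≤ m ∧ h k = f i + g j ∧
        (Finset.Ico k (n + m)).val.map (fun t => h (t + 1) - h t) =
          (Finset.Ico i n).val.map (fun t => f (t + 1) - f t) +
            (Finset.Ico j m).val.map (fun t => g (t + 1) - g t)) ∧
      (∀ i' j', i' + j' = k → i' ≤ n → j' ≤ m → h k ≤ f i' + g j') := by
    intro k
    induction k with
    | zero =>
      intro _
      refine ⟨⟨0, 0, rfl, Nat.zero_le _, Nat.zero_le _, h0, ?_⟩, ?_⟩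
      · simp only [← Finset.range_eq_Ico, Finset.range_val]
        exact hmerge
      · intro i' j' hij' _ _
        have h1 : i' = 0 := by omega
        have h2 : j' = 0 := by omega
        subst h1; subst h2; rw [h0]
    | succ k ih =>
      intro hk1
      have hk : k < n + m := hk1
      obtain ⟨⟨i, j, hij, hi, hj, hval, hmul⟩, hlow⟩ := ih (le_of_lt hk)
      by_cases hcase : i < n ∧ (j = m ∨ (j < m ∧ f (i + 1) - f i ≤ g (j + 1) - g j))
      · obtain ⟨hval1, hmul1, hlow1⟩ := dcc_step n m f g h k i j monof monog monoh
          hk hij hi hj hval hmul hlow hcase.1 hcase.2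
        exact ⟨⟨i + 1, j, by omega, by omega, hj, hval1, hmul1⟩, hlow1⟩
      · have hjm : j < m := by
          rcases Nat.lt_or_ge j m with h' | h'
          · exact h'
          · exact absurd ⟨by omega, Or.inl (by omega)⟩ hcase
        have hcase2 : i = n ∨ (i < n ∧ g (j + 1) - g j ≤ f (i + 1) - f i) := by
          rcases Nat.lt_or_ge i n with h' | h'
          · right
            refine ⟨h', ?_⟩
            by_contra hcon
            push_neg at hcon
            exact hcase ⟨h', Or.inr ⟨hjm, le_of_lt hcon⟩⟩
          · left; omega
        obtain ⟨hval1, hmul1, hlow1⟩ := dcc_step m n g f h k j i monog monof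
          (by intro a b hab hb; exact monoh a b hab (by omega))
          (by omega) (by omega) hj hi (by rw [hval]; ring)
          (by rw [Nat.add_comm m n, hmul]; exact add_comm _ _)
          (by intro i' j' hs ha hb; rw [add_comm]; exact hlow j' i' (by omega) hb ha)
          hjm hcase2
        refine ⟨⟨i, j + 1, by omega, hi, by omega, by rw [hval1]; ring, ?_⟩, ?_⟩
        · rw [Nat.add_comm n m, hmul1]; exact add_comm _ _
        · intro i' j' hs ha hb
          exact le_of_le_of_eq (hlow1 j' i' (by omega) hb ha) (add_comm _ _)
  intro k hk
  obtain ⟨⟨i, j, hij, hi, hj, hval, -⟩, hlow⟩ := key k hk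
  have hne : Set.Nonempty {z | ∃ i j : ℕ, i + j = k ∧ i ≤ n ∧ j ≤ m ∧ z = f i + g j} :=
    ⟨f i + g j, ⟨i, j, hij, hi, hj, rfl⟩⟩
  have hbdd : BddBelow {z | ∃ i j : ℕ, i + j = k ∧ i ≤ n ∧ j ≤ m ∧ z = f i + g j} := by
    refine ⟨h k, ?_⟩
    rintro z ⟨i', j', hs, ha, hb, rfl⟩
    exact hlow i' j' hs ha hb
  apply le_antisymm
  · apply le_csInf hne
    rintro z ⟨i', j', hs, ha, hb, rfl⟩
    exact hlow i' j' hs ha hb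
  · exact csInf_le hbdd ⟨i, j, hij, hi, hj, hval⟩
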